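/- Let K be a field, n ≥ 1 an integer, and let ε_1,…,ε_n ∈ K with ε_j ≠ ε_n for 1 ≤ j < n, and d_{jk} ∈ K for 1 ≤ k < j ≤ n. Define c_n = 1 and, for 1 ≤ ℓ < n, c_ℓ = Σ over all integers r ≥ 1 and all chains ℓ = j_r < j_{r−1} < ⋯ < j_1 < j_0 = n of the quantity (d_{j_0 j_1} d_{j_1 j_2} ⋯ d_{j_{r−1} j_r}) / ((ε_n − ε_{j_1})(ε_n − ε_{j_2}) ⋯ (ε_n − ε_{j_r})). Then these coefficients satisfy, for every 1 < ℓ ≤ n, the linear recurrence (ε_n − ε_{ℓ−1})·c_{ℓ−1} = Σ_{k=ℓ}^{n} c_k · d_{k,ℓ−1}. -/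

import Mathlib

private lemma zipProd_append {α : Type*} {M : Type*} [CommMonoid M] (f : α × α → M) :
    ∀ (l : List α) (a x : α),
      (((a :: (l ++ [x])).zip (l ++ [x])).map f).prod
        = (((a :: l).zip l).map f).prod *
            f ((a :: l).getLast (List.cons_ne_nil a l), x)
  | [], a, x => by simp
  | b :: t, a, x => by
    have ih := zipProd_append f t b x
    simp only [List.cons_append, List.zip_cons_cons, List.map_cons, List.prod_cons] at ih ⊢
    rw [ih, List.getLast_cons (List.cons_ne_nil b t), mul_assoc]

private lemma getLast_cons_append_singleton {α : Type*} :
    ∀ (l : List α) (a x : α), (a :: (l ++ [x])).getLast (List.cons_ne_nil _ _) = x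
  | [], _, _ => rfl
  | b :: t, a, x => by
    rw [List.getLast_cons (by simp)]
    exact getLast_cons_append_singleton t b x

/-- **Closed-form solution of the descending linear recurrence as a sum over
chains.**  `n+1` plays the role of the `n ≥ 1` of the informal statement;
indices are `0`-based, so `Fin.last n` corresponds to the informal index `n`.
A chain `ℓ = j_r < j_{r-1} < ⋯ < j_1 < j_0 = n` (with `r ≥ 1`) is encoded by
the set `S = {j_1, …, j_{r-1}}` of its intermediate elements, which is an
arbitrary subset of the open interval `(ℓ, n)`; the corresponding decreasing
list of indices is `Fin.last n :: ((S.sort (· ≤ ·)).reverse ++ [ℓ])`, the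
numerator is the product of `d` over its consecutive pairs, and the
denominator is the product of `ε_n - ε_j` over the tail of the list. -/
theorem explicit_chain_sum_solves_recurrence
    {K : Type*} [Field K] (n : ℕ)
    (ε : Fin (n + 1) → K) (d : Fin (n + 1) → Fin (n + 1) → K)
    (hreg : ∀ j : Fin (n + 1), j ≠ Fin.last n → ε j ≠ ε (Fin.last n))
    (c : Fin (n + 1) → K)
    (hclast : c (Fin.last n) = 1)
    (hc : ∀ ℓ : Fin (n + 1), ℓ ≠ Fin.last n →
      c ℓ = ∑ S ∈ (Finset.Ioo ℓ (Fin.last n)).powerset,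
        (((Fin.last n :: ((S.sort (· ≤ ·)).reverse ++ [ℓ])).zip
            ((S.sort (· ≤ ·)).reverse ++ [ℓ])).map fun p => d p.1 p.2).prod /
        (((S.sort (· ≤ ·)).reverse ++ [ℓ]).map fun j => ε (Fin.last n) - ε j).prod) :
    ∀ ℓ : Fin n,
      (ε (Fin.last n) - ε (Fin.castSucc ℓ)) * c (Fin.castSucc ℓ) =
        ∑ k ∈ Finset.Ioi (Fin.castSucc ℓ), c k * d k (Fin.castSucc ℓ) := by
  intro ℓ
  set A := Fin.last n with hA
  set L := Fin.castSucc ℓ with hL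
  have hLA : L < A := Fin.castSucc_lt_last ℓ
  have hgL : ε A - ε L ≠ 0 := sub_ne_zero.mpr (Ne.symm (hreg L hLA.ne))
  set F : Finset (Fin (n + 1)) → K := fun S =>
    (((A :: ((S.sort (· ≤ ·)).reverse ++ [L])).zip
        ((S.sort (· ≤ ·)).reverse ++ [L])).map fun p => d p.1 p.2).prod /
    (((S.sort (· ≤ ·)).reverse ++ [L]).map fun j => ε A - ε j).prod with hF
  -- the key per-chain identity
  have key : ∀ k : Fin (n + 1), L < k → k < A → ∀ S' ∈ (Finset.Ioo k A).powerset,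
      ((((A :: ((S'.sort (· ≤ ·)).reverse ++ [k])).zip
          ((S'.sort (· ≤ ·)).reverse ++ [k])).map fun p => d p.1 p.2).prod /
        (((S'.sort (· ≤ ·)).reverse ++ [k]).map fun j => ε A - ε j).prod) * d k L
      = (ε A - ε L) * F (insert k S') := by
    intro k hk1 hk2 S' hS'
    rw [Finset.mem_powerset] at hS'
    have hkS' : k ∉ S' := fun h => absurd (Finset.mem_Ioo.mp (hS' h)).1 (lt_irrefl k)
    have hsort : (insert k S').sort (· ≤ ·) = k :: S'.sort (· ≤ ·) :=
      Finset.sort_insert _ (fun b hb => (Finset.mem_Ioo.mp (hS' hb)).1.le) hkS'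
    set l' := (S'.sort (· ≤ ·)).reverse with hl'
    have hDl' : ((l'.map fun j => ε A - ε j).prod) ≠ 0 := by
      apply List.prod_ne_zero
      intro h0
      rw [List.mem_map] at h0
      obtain ⟨j, hj, hj0⟩ := h0
      have hjA : j ≠ A := ne_of_lt (Finset.mem_Ioo.mp
        (hS' ((Finset.mem_sort (α := Fin (n+1)) (· ≤ ·)).mp (List.mem_reverse.mp hj)))).2
      exact (sub_ne_zero.mpr (Ne.symm (hreg j hjA))) hj0
    have hgk : ε A - ε k ≠ 0 := sub_ne_zero.mpr (Ne.symm (hreg k (ne_of_lt hk2)))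
    simp only [hF]
    simp only [hsort, List.reverse_cons, ← hl']
    rw [zipProd_append (fun p => d p.1 p.2) (l' ++ [k]) A L,
      getLast_cons_append_singleton]
    rw [List.map_append, List.map_append, List.prod_append, List.prod_append]
    simp only [List.map_cons, List.map_nil, List.prod_cons, List.prod_nil, mul_one]
    field_simp
    simp only [List.map_append, List.prod_append, List.map_cons, List.map_nil,
      List.prod_cons, List.prod_nil, mul_one]
    ring
  rw [hc L hLA.ne, Finset.mul_sum]
  have hIoi : Finset.Ioi L = insert A (Finset.Ioo L A) := by
    ext x
    simp only [Finset.mem_Ioi, Finset.mem_insert, Finset.mem_Ioo]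
    constructor
    · intro hx
      rcases eq_or_lt_of_le (Fin.le_last x) with h | h
      · exact Or.inl h
      · exact Or.inr ⟨hx, h⟩
    · rintro (rfl | ⟨h1, _⟩)
      · exact hLA
      · exact h1
  rw [hIoi, Finset.sum_insert (by simp)]
  rw [← Finset.insert_erase (Finset.empty_mem_powerset (Finset.Ioo L A)),
    Finset.sum_insert (Finset.notMem_erase _ _)]
  congr 1
  · -- empty chain ↔ k = A term
    rw [hclast, one_mul]
    simp only [Finset.sort_empty, List.reverse_nil, List.nil_append]
    simp only [List.zip_cons_cons, List.zip_nil_right, List.map_cons, List.map_nil,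
      List.prod_cons, List.prod_nil, mul_one]
    field_simp
  · -- nonempty chains ↔ k ∈ Ioo L A
    have hRHS : ∀ k ∈ Finset.Ioo L A, c k * d k L =
        ∑ S' ∈ (Finset.Ioo k A).powerset, (ε A - ε L) * F (insert k S') := by
      intro k hk
      rw [Finset.mem_Ioo] at hk
      rw [hc k (ne_of_lt hk.2), Finset.sum_mul]
      exact Finset.sum_congr rfl fun S' hS' => key k hk.1 hk.2 S' hS'
    rw [Finset.sum_congr rfl hRHS]
    refine Eq.trans ?_ (Finset.sum_sigma (Finset.Ioo L A)
      (fun k => (Finset.Ioo k A).powerset)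
      (fun p => (ε A - ε L) * F (insert p.1 p.2)))
    refine (Finset.sum_bij'
      (fun (p : Σ _ : Fin (n+1), Finset (Fin (n+1))) _ => insert p.1 p.2)
      (fun S hS => ⟨S.min' (Finset.nonempty_of_ne_empty (Finset.ne_of_mem_erase hS)),
        S.erase (S.min' (Finset.nonempty_of_ne_empty (Finset.ne_of_mem_erase hS)))⟩)
      ?_ ?_ ?_ ?_ ?_).symm
    · -- insert lands in erased powerset
      intro p hp
      rw [Finset.mem_sigma, Finset.mem_powerset] at hp
      obtain ⟨hp1, hp2⟩ := hp
      rw [Finset.mem_Ioo] at hp1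
      rw [Finset.mem_erase, Finset.mem_powerset]
      refine ⟨Finset.insert_ne_empty _ _, ?_⟩
      intro x hx
      rcases Finset.mem_insert.mp hx with rfl | hx
      · exact Finset.mem_Ioo.mpr hp1
      · have := Finset.mem_Ioo.mp (hp2 hx)
        exact Finset.mem_Ioo.mpr ⟨hp1.1.trans this.1, this.2⟩
    · -- min'/erase lands in sigma
      intro S hS
      have hSne : S.Nonempty := Finset.nonempty_of_ne_empty (Finset.ne_of_mem_erase hS)
      have hSsub : S ⊆ Finset.Ioo L A :=
        Finset.mem_powerset.mp (Finset.mem_of_mem_erase hS)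
      rw [Finset.mem_sigma, Finset.mem_powerset]
      refine ⟨hSsub (S.min'_mem hSne), ?_⟩
      intro x hx
      have hxS := Finset.mem_of_mem_erase hx
      have := Finset.mem_Ioo.mp (hSsub hxS)
      exact Finset.mem_Ioo.mpr
        ⟨lt_of_le_of_ne (S.min'_le x hxS) (Ne.symm (Finset.ne_of_mem_erase hx)), this.2⟩
    · -- left inverse : insert then min'/erase
      intro p hp
      rw [Finset.mem_sigma, Finset.mem_powerset] at hp
      obtain ⟨hp1, hp2⟩ := hp
      have hkp : p.1 ∉ p.2 := fun h =>
        absurd (Finset.mem_Ioo.mp (hp2 h)).1 (lt_irrefl p.1)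
      have hmin : (insert p.1 p.2).min' (Finset.insert_nonempty _ _) = p.1 := by
        apply le_antisymm
        · exact Finset.min'_le _ _ (Finset.mem_insert_self _ _)
        · rcases Finset.mem_insert.mp
            ((insert p.1 p.2).min'_mem (Finset.insert_nonempty _ _)) with h | h
          · rw [h]
          · exact (Finset.mem_Ioo.mp (hp2 h)).1.le
      simp only [hmin]
      rw [Finset.erase_insert hkp]
    · -- right inverse : min'/erase then insert
      intro S hS
      have hSne : S.Nonempty := Finset.nonempty_of_ne_empty (Finset.ne_of_mem_erase hS)
      exact Finset.insert_erase (S.min'_mem hSne)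
    · -- values agree
      intro p hp
      rfl
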